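/- If G is an extremal graph among bipartite unicyclic graphs with (p,q)-partition (1 < p < q), then all pendant vertices of G belong to the larger part Q of the bipartition. -/

import Mathlib

/-- The Wiener index of a graph: the sum of distances over all unordered pairs of vertices. -/
noncomputable def wienerIndex {V : Type*} [Fintype V] (G : SimpleGraph V) : ℕ :=
  (∑ u : V, ∑ v : V, G.dist u v) / 2

/-- The transmission of a vertex: the sum of distances from it to all other vertices. -/
noncomputable def transmission {V : Type*} [Fintype V] (G : SimpleGraph V) (x : V) : ℕ :=
  ∑ u : V, G.dist x u

/-- `G` is bipartite with parts of sizes `p` and `q`: there is a set of vertices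
of size `p`, with complement of size `q`, such that every edge goes between the
set and its complement. -/
def hasBipartition {V : Type*} [Fintype V] [DecidableEq V]
    (G : SimpleGraph V) (p q : ℕ) : Prop :=
  ∃ s : Finset V, (∀ a b, G.Adj a b → (a ∈ s ↔ b ∉ s)) ∧ s.card = p ∧ sᶜ.card = q

/-- `G` is unicyclic: connected and containing exactly one cycle; equivalently
(for a finite graph), connected with exactly as many edges as vertices. -/
def IsUnicyclic {V : Type*} [Fintype V] (G : SimpleGraph V) : Prop :=
  G.Connected ∧ Nat.card G.edgeSet = Fintype.card V

set_option linter.unusedSectionVars false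

section Aux

open SimpleGraph Finset

variable {V : Type*} [Fintype V] [DecidableEq V] {G : SimpleGraph V} {v u c : V}

lemma pendant_adj (hN : G.neighborSet v = {u}) : G.Adj v u := by
  have : u ∈ G.neighborSet v := by rw [hN]; rfl
  exact this

lemma pendant_adj_iff (hN : G.neighborSet v = {u}) : G.Adj v c ↔ c = u := by
  constructor
  · intro h
    have : c ∈ G.neighborSet v := h
    rwa [hN, Set.mem_singleton_iff] at this
  · rintro rfl; exact pendant_adj hN

lemma pendant_not_mem_support (hN : G.neighborSet v = {u}) {a b : V}
    (p : G.Walk a b) (hp : p.IsPath) (ha : a ≠ v) (hb : b ≠ v) : v ∉ p.support := by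
  intro hv
  -- split at v
  have hspec := p.take_spec hv
  set q := p.takeUntil v hv with hq
  set r := p.dropUntil v hv with hr
  -- r : v → b nonnil
  have hrnil : ¬ r.Nil := by
    intro h
    exact hb (SimpleGraph.Walk.Nil.eq h).symm
  have hqnil : ¬ q.reverse.Nil := by
    intro h
    have : a = v := (SimpleGraph.Walk.Nil.eq h).symm
    exact ha this
  have hu1 : r.getVert 1 = u := by
    have := r.adj_snd hrnil
    exact (pendant_adj_iff hN).mp this
  have hu2 : q.reverse.getVert 1 = u := by
    have := q.reverse.adj_snd hqnil
    exact (pendant_adj_iff hN).mp this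
  have hu_in_q : u ∈ q.support := by
    rw [← hu2]
    have : q.reverse.getVert 1 ∈ q.reverse.support := by
      rw [SimpleGraph.Walk.mem_support_iff_exists_getVert]
      refine ⟨1, rfl, ?_⟩
      rw [SimpleGraph.Walk.not_nil_iff_lt_length] at hqnil
      omega
    rwa [SimpleGraph.Walk.support_reverse, List.mem_reverse] at this
  have hu_in_r : u ∈ r.support := by
    rw [← hu1]
    rw [SimpleGraph.Walk.mem_support_iff_exists_getVert]
    refine ⟨1, rfl, ?_⟩
    rw [SimpleGraph.Walk.not_nil_iff_lt_length] at hrnil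
    omega
  have hvu : v ≠ u := (pendant_adj hN).ne
  have hu_in_rt : u ∈ r.support.tail := by
    have := SimpleGraph.Walk.support_eq_cons r
    rw [this] at hu_in_r
    rcases List.mem_cons.mp hu_in_r with h | h
    · exact absurd h.symm hvu
    · rw [this]; exact h
  have hnd := hp.support_nodup
  rw [← hspec, SimpleGraph.Walk.support_append, List.nodup_append] at hnd
  exact hnd.2.2 u hu_in_q u hu_in_rt rfl

lemma pendant_dist (hconn : G.Connected) (hN : G.neighborSet v = {u}) (hc : c ≠ v) :
    G.dist v c = G.dist u c + 1 := by
  have hadj : G.Adj v u := pendant_adj hN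
  refine le_antisymm ?_ ?_
  · calc G.dist v c ≤ G.dist v u + G.dist u c := hconn.dist_triangle
    _ = 1 + G.dist u c := by rw [SimpleGraph.dist_eq_one_iff_adj.mpr hadj]
    _ = G.dist u c + 1 := by omega
  · obtain ⟨p, hp, hlen⟩ := hconn.exists_path_of_dist v c
    have hnil : ¬ p.Nil := by
      intro h
      exact hc (SimpleGraph.Walk.Nil.eq h).symm
    have h1 : p.getVert 1 = u := (pendant_adj_iff hN).mp (p.adj_snd hnil)
    have h2 : G.dist (p.getVert 1) c ≤ p.tail.length := SimpleGraph.dist_le p.tail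
    have h1' : G.dist u c = G.dist (p.getVert 1) c := by rw [h1]
    rw [← h1'] at h2
    have hlt := SimpleGraph.Walk.length_tail_add_one hnil
    omega

/-- The graph obtained by deleting edge `vu` and adding edge `vz`. -/
def reattach (G : SimpleGraph V) (v u z : V) : SimpleGraph V where
  Adj a b := a ≠ b ∧ ((G.Adj a b ∧ s(a, b) ≠ s(v, u)) ∨ s(a, b) = s(v, z))
  symm := by
    constructor
    intro a b ⟨hne, h⟩
    refine ⟨hne.symm, ?_⟩
    rw [Sym2.eq_swap] at h
    rcases h with ⟨h1, h2⟩ | h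
    · exact Or.inl ⟨h1.symm, h2⟩
    · exact Or.inr h
  loopless := by constructor; intro a ⟨hne, _⟩; exact hne rfl

variable {z : V}

lemma reattach_adj_off (ha : a ≠ v) (hb : b ≠ v) :
    (reattach G v u z).Adj a b ↔ G.Adj a b := by
  constructor
  · rintro ⟨hne, ⟨h1, _⟩ | h⟩
    · exact h1
    · rw [Sym2.eq_iff] at h
      rcases h with ⟨rfl, _⟩ | ⟨_, rfl⟩
      · exact absurd rfl ha
      · exact absurd rfl hb
  · intro h
    refine ⟨h.ne, Or.inl ⟨h, ?_⟩⟩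
    intro hh
    rw [Sym2.eq_iff] at hh
    rcases hh with ⟨rfl, _⟩ | ⟨_, rfl⟩
    · exact ha rfl
    · exact hb rfl

lemma reattach_adj_v (hN : G.neighborSet v = {u}) (hvz : v ≠ z) :
    (reattach G v u z).Adj v c ↔ c = z := by
  constructor
  · rintro ⟨hne, ⟨h1, h2⟩ | h⟩
    · exact absurd (by rw [(pendant_adj_iff hN).mp h1]) h2
    · rw [Sym2.eq_iff] at h
      rcases h with ⟨_, rfl⟩ | ⟨h3, _⟩
      · rfl
      · exact absurd h3 hvz
  · rintro rfl
    exact ⟨hvz, Or.inr rfl⟩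

lemma reattach_neighborSet (hN : G.neighborSet v = {u}) (hvz : v ≠ z) :
    (reattach G v u z).neighborSet v = {z} := by
  ext c
  rw [SimpleGraph.mem_neighborSet, reattach_adj_v hN hvz, Set.mem_singleton_iff]

lemma reattach_edgeSet (hvz : v ≠ z) :
    (reattach G v u z).edgeSet = insert s(v, z) (G.edgeSet \ {s(v, u)}) := by
  ext e
  induction e with
  | _ a b =>
    rw [SimpleGraph.mem_edgeSet]
    constructor
    · rintro ⟨hne, ⟨h1, h2⟩ | h⟩
      · exact Set.mem_insert_of_mem _ ⟨h1, h2⟩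
      · rw [h]; exact Set.mem_insert _ _
    · rintro (h | ⟨h1, h2⟩)
      · refine ⟨?_, Or.inr h⟩
        rw [Sym2.eq_iff] at h
        rcases h with ⟨rfl, rfl⟩ | ⟨rfl, rfl⟩
        · exact hvz
        · exact fun hh => hvz hh.symm
      · exact ⟨((SimpleGraph.mem_edgeSet (G := G)).mp h1).ne, Or.inl ⟨h1, h2⟩⟩

lemma reattach_card_edgeSet (hN : G.neighborSet v = {u}) (hvz : v ≠ z) :
    Nat.card (reattach G v u z).edgeSet = Nat.card G.edgeSet := by
  have hvu : s(v, u) ∈ G.edgeSet := (pendant_adj hN)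
  have hnotin : s(v, z) ∉ G.edgeSet \ {s(v, u)} := by
    rintro ⟨h1, h2⟩
    have : z = u := (pendant_adj_iff hN).mp h1
    subst this
    exact h2 rfl
  rw [Nat.card_coe_set_eq, Nat.card_coe_set_eq, reattach_edgeSet hvz,
    Set.ncard_insert_of_notMem hnotin (G.edgeSet \ {s(v, u)}).toFinite]
  rw [Set.ncard_diff_singleton_add_one hvu G.edgeSet.toFinite]

lemma reattach_bipartition {s : Finset V} (hs : ∀ a b, G.Adj a b → (a ∈ s ↔ b ∉ s))
    (hside : v ∈ s ↔ z ∉ s) :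
    ∀ a b, (reattach G v u z).Adj a b → (a ∈ s ↔ b ∉ s) := by
  rintro a b ⟨hne, ⟨h1, _⟩ | h⟩
  · exact hs a b h1
  · rw [Sym2.eq_iff] at h
    rcases h with ⟨rfl, rfl⟩ | ⟨rfl, rfl⟩
    · exact hside
    · tauto

lemma exists_walk_to_other {H : SimpleGraph V} (hconn : G.Connected)
    (hN : G.neighborSet v = {u})
    (hoff : ∀ a b, a ≠ v → b ≠ v → G.Adj a b → H.Adj a b)
    {a b : V} (ha : a ≠ v) (hb : b ≠ v) :
    ∃ q : H.Walk a b, q.length = G.dist a b := by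
  obtain ⟨p, hp, hlen⟩ := hconn.exists_path_of_dist a b
  have hv := pendant_not_mem_support hN p hp ha hb
  have hedges : ∀ e ∈ p.edges, e ∈ H.edgeSet := by
    intro e he
    induction e with
    | _ x y =>
      have hadj : G.Adj x y := p.adj_of_mem_edges he
      have hx : x ∈ p.support := p.fst_mem_support_of_mem_edges he
      have hy : y ∈ p.support := p.snd_mem_support_of_mem_edges he
      exact hoff x y (fun h => hv (h ▸ hx)) (fun h => hv (h ▸ hy)) hadj
  exact ⟨p.transfer H hedges, by rw [SimpleGraph.Walk.length_transfer]; exact hlen⟩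

lemma reattach_connected (hconn : G.Connected) (hN : G.neighborSet v = {u}) (hvz : v ≠ z) :
    (reattach G v u z).Connected := by
  have hreach : ∀ a : V, (reattach G v u z).Reachable a z := by
    intro a
    by_cases ha : a = v
    · subst ha
      exact ((reattach_adj_v hN hvz).mpr rfl).reachable
    · obtain ⟨q, _⟩ := exists_walk_to_other (H := reattach G v u z) hconn hN
        (fun a b ha hb hadj => (reattach_adj_off ha hb).mpr hadj) ha hvz.symm
      exact q.reachable
  haveI : Nonempty V := hconn.nonempty
  exact ⟨fun a b => (hreach a).trans (hreach b).symm⟩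

lemma reattach_dist_off {a b : V} (hconn : G.Connected) (hN : G.neighborSet v = {u})
    (hvz : v ≠ z) (ha : a ≠ v) (hb : b ≠ v) :
    (reattach G v u z).dist a b = G.dist a b := by
  refine le_antisymm ?_ ?_
  · obtain ⟨q, hq⟩ := exists_walk_to_other (H := reattach G v u z) hconn hN
      (fun a b ha hb hadj => (reattach_adj_off ha hb).mpr hadj) ha hb
    exact hq ▸ SimpleGraph.dist_le q
  · obtain ⟨q, hq⟩ := exists_walk_to_other (H := G) (reattach_connected hconn hN hvz)
      (reattach_neighborSet hN hvz)
      (fun a b ha hb hadj => (reattach_adj_off ha hb).mp hadj) ha hb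
    exact hq ▸ SimpleGraph.dist_le q

lemma reattach_dist_v (hconn : G.Connected) (hN : G.neighborSet v = {u})
    (hvz : v ≠ z) (hc : c ≠ v) :
    (reattach G v u z).dist v c = G.dist z c + 1 := by
  rw [pendant_dist (reattach_connected hconn hN hvz) (reattach_neighborSet hN hvz) hc]
  · rw [SimpleGraph.dist_comm, reattach_dist_off hconn hN hvz hc hvz.symm,
      SimpleGraph.dist_comm]

lemma sum_split (f : V → V → ℕ) (hsym : ∀ a b, f a b = f b a) (hdiag : f v v = 0) :
    ∑ a, ∑ b, f a b =
      (∑ a ∈ Finset.univ.erase v, ∑ b ∈ Finset.univ.erase v, f a b) +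
        2 * ∑ c ∈ Finset.univ.erase v, f v c := by
  rw [← Finset.sum_erase_add _ _ (Finset.mem_univ v)]
  have h1 : ∀ a : V, ∑ b, f a b = (∑ b ∈ Finset.univ.erase v, f a b) + f a v :=
    fun a => (Finset.sum_erase_add _ _ (Finset.mem_univ v)).symm
  rw [Finset.sum_congr rfl (fun a _ => h1 a), Finset.sum_add_distrib, h1 v, hdiag,
    add_zero]
  have h2 : ∑ a ∈ Finset.univ.erase v, f a v = ∑ a ∈ Finset.univ.erase v, f v a :=
    Finset.sum_congr rfl (fun a _ => hsym a v)
  rw [h2]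
  ring

lemma reattach_wiener_gt (hconn : G.Connected) (hN : G.neighborSet v = {u}) (hvz : v ≠ z)
    (himp : (∑ c ∈ Finset.univ.erase v, G.dist u c) < ∑ c ∈ Finset.univ.erase v, G.dist z c) :
    wienerIndex G < wienerIndex (reattach G v u z) := by
  set H := reattach G v u z with hH
  have hSG := sum_split (v := v) G.dist
    (fun a b => G.dist_comm) (SimpleGraph.dist_self (G := G) (v := v))
  have hSH := sum_split (v := v) H.dist
    (fun a b => H.dist_comm) (SimpleGraph.dist_self (G := H) (v := v))
  have hcore : ∀ a ∈ Finset.univ.erase v, ∀ b ∈ Finset.univ.erase v,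
      H.dist a b = G.dist a b := by
    intro a ha b hb
    exact reattach_dist_off hconn hN hvz (Finset.ne_of_mem_erase ha) (Finset.ne_of_mem_erase hb)
  have hcoreeq : (∑ a ∈ Finset.univ.erase v, ∑ b ∈ Finset.univ.erase v, H.dist a b)
      = ∑ a ∈ Finset.univ.erase v, ∑ b ∈ Finset.univ.erase v, G.dist a b :=
    Finset.sum_congr rfl fun a ha => Finset.sum_congr rfl fun b hb => hcore a ha b hb
  have hrowH : ∀ c ∈ Finset.univ.erase v, H.dist v c = G.dist z c + 1 := fun c hc =>
    reattach_dist_v hconn hN hvz (Finset.ne_of_mem_erase hc)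
  have hrowG : ∀ c ∈ Finset.univ.erase v, G.dist v c = G.dist u c + 1 := fun c hc =>
    pendant_dist hconn hN (Finset.ne_of_mem_erase hc)
  have hHrow : (∑ c ∈ Finset.univ.erase v, H.dist v c)
      = (∑ c ∈ Finset.univ.erase v, G.dist z c) + (Finset.univ.erase v).card := by
    rw [Finset.sum_congr rfl hrowH, Finset.sum_add_distrib, Finset.sum_const, smul_eq_mul,
      mul_one]
  have hGrow : (∑ c ∈ Finset.univ.erase v, G.dist v c)
      = (∑ c ∈ Finset.univ.erase v, G.dist u c) + (Finset.univ.erase v).card := by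
    rw [Finset.sum_congr rfl hrowG, Finset.sum_add_distrib, Finset.sum_const, smul_eq_mul,
      mul_one]
  have hkey : (∑ a, ∑ b, G.dist a b) + 2 ≤ ∑ a, ∑ b, H.dist a b := by
    rw [hSG, hSH, hcoreeq, hHrow, hGrow]
    omega
  have : wienerIndex G + 1 ≤ wienerIndex H := by
    unfold wienerIndex
    calc (∑ a, ∑ b, G.dist a b) / 2 + 1 = ((∑ a, ∑ b, G.dist a b) + 2) / 2 := by omega
    _ ≤ (∑ a, ∑ b, H.dist a b) / 2 := Nat.div_le_div_right hkey
  omega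

lemma sum_degree_compl {s : Finset V} [DecidableRel G.Adj] (hs : ∀ a b, G.Adj a b → (a ∈ s ↔ b ∉ s)) :
    ∑ w ∈ sᶜ, G.degree w = G.edgeFinset.card := by
  have : ∑ w ∈ sᶜ, G.degree w = (sᶜ.sigma fun w => G.neighborFinset w).card := by
    rw [Finset.card_sigma]
    rfl
  rw [this]
  refine Finset.card_bij (fun (a : (_ : V) × V) _ => s(a.1, a.2)) ?_ ?_ ?_
  · rintro ⟨w, y⟩ ha
    rw [Finset.mem_sigma] at ha
    rw [SimpleGraph.mem_edgeFinset, SimpleGraph.mem_edgeSet]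
    exact (SimpleGraph.mem_neighborFinset _ _ _).mp ha.2
  · rintro ⟨w, y⟩ ha ⟨w', y'⟩ ha' heq
    rw [Finset.mem_sigma] at ha ha'
    have hadj : G.Adj w y := (SimpleGraph.mem_neighborFinset _ _ _).mp ha.2
    have hadj' : G.Adj w' y' := (SimpleGraph.mem_neighborFinset _ _ _).mp ha'.2
    have hw : w ∉ s := Finset.mem_compl.mp ha.1
    have hw' : w' ∉ s := Finset.mem_compl.mp ha'.1
    rw [Sym2.eq_iff] at heq
    rcases heq with ⟨rfl, rfl⟩ | ⟨h1, h2⟩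
    · rfl
    · exfalso
      have hy : y ∈ s := by have := hs w y hadj; tauto
      simp only [] at h1 h2
      rw [← h2] at hw'
      exact hw' hy
  · intro e he
    induction e with
    | _ a b =>
      rw [SimpleGraph.mem_edgeFinset, SimpleGraph.mem_edgeSet] at he
      by_cases hb : b ∈ s
      · have ha : a ∉ s := by have := hs a b he; tauto
        refine ⟨⟨a, b⟩, ?_, rfl⟩
        rw [Finset.mem_sigma]
        exact ⟨Finset.mem_compl.mpr ha, (SimpleGraph.mem_neighborFinset _ _ _).mpr he⟩
      · refine ⟨⟨b, a⟩, ?_, Sym2.eq_swap⟩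
        rw [Finset.mem_sigma]
        exact ⟨Finset.mem_compl.mpr hb, (SimpleGraph.mem_neighborFinset _ _ _).mpr he.symm⟩

lemma degree_pos_of_connected [DecidableRel G.Adj] (hconn : G.Connected) (hcard : 2 ≤ Fintype.card V) (w : V) :
    0 < G.degree w := by
  obtain ⟨y, hy⟩ := Fintype.exists_ne_of_one_lt_card (by omega) w
  obtain ⟨walk⟩ := hconn.preconnected w y
  have hnil : ¬ walk.Nil := by
    intro h
    exact hy (SimpleGraph.Walk.Nil.eq h).symm
  rw [SimpleGraph.degree_pos_iff_exists_adj]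
  exact ⟨walk.getVert 1, walk.adj_snd hnil⟩

lemma exists_pendant_compl {s : Finset V} {p q : ℕ}
    (hs : ∀ a b, G.Adj a b → (a ∈ s ↔ b ∉ s))
    (hsp : s.card = p) (hsq : sᶜ.card = q) (hpq : p < q)
    (hconn : G.Connected) (hcard : Nat.card G.edgeSet = Fintype.card V)
    (hn : 2 ≤ Fintype.card V) :
    ∃ w x, w ∈ sᶜ ∧ G.neighborSet w = {x} := by
  letI : DecidableRel G.Adj := Classical.decRel _
  have hpqcard : p + q = Fintype.card V := by
    rw [← hsp, ← hsq]
    exact s.card_add_card_compl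
  have hedge : G.edgeFinset.card = Fintype.card V := by
    rw [← hcard, Nat.card_coe_set_eq, Set.ncard_eq_toFinset_card']
    congr 1
  have hsum : ∑ w ∈ sᶜ, G.degree w = p + q := by
    rw [sum_degree_compl hs, hedge]
    omega
  -- if all degrees in sᶜ were ≥ 2, then p + q ≥ 2q, contradiction
  have : ∃ w ∈ sᶜ, G.degree w < 2 := by
    by_contra h
    push_neg at h
    have : 2 * q ≤ ∑ w ∈ sᶜ, G.degree w := by
      calc 2 * q = ∑ _w ∈ sᶜ, 2 := by rw [Finset.sum_const, hsq, smul_eq_mul, mul_comm]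
      _ ≤ ∑ w ∈ sᶜ, G.degree w := Finset.sum_le_sum h
    omega
  obtain ⟨w, hw, hdeg⟩ := this
  have hpos := degree_pos_of_connected hconn hn w
  have hdeg1 : G.degree w = 1 := by omega
  rw [← SimpleGraph.card_neighborFinset_eq_degree, Finset.card_eq_one] at hdeg1
  obtain ⟨x, hx⟩ := hdeg1
  refine ⟨w, x, hw, ?_⟩
  ext c
  rw [SimpleGraph.mem_neighborSet, ← SimpleGraph.mem_neighborFinset, hx,
    Finset.mem_singleton, Set.mem_singleton_iff]

lemma walk_edges_getVert {a b : V} (p : G.Walk a b) :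
    ∀ i, i < p.length → s(p.getVert i, p.getVert (i + 1)) ∈ p.edges := by
  induction p with
  | nil => intro i h; simp at h
  | @cons α β γ h q ih =>
    intro i hi
    cases i with
    | zero =>
      rw [SimpleGraph.Walk.edges_cons]
      have e1 : (SimpleGraph.Walk.cons h q).getVert (0 + 1) = q.getVert 0 :=
        SimpleGraph.Walk.getVert_cons_succ q h
      rw [SimpleGraph.Walk.getVert_zero, e1, SimpleGraph.Walk.getVert_zero]
      exact List.mem_cons_self
    | succ i =>
      rw [SimpleGraph.Walk.edges_cons]
      rw [SimpleGraph.Walk.length_cons] at hi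
      refine List.mem_cons_of_mem _ ?_
      have h1 : (SimpleGraph.Walk.cons h q).getVert (i + 1) = q.getVert i :=
        SimpleGraph.Walk.getVert_cons_succ q h
      have h2 : (SimpleGraph.Walk.cons h q).getVert (i + 1 + 1) = q.getVert (i + 1) :=
        SimpleGraph.Walk.getVert_cons_succ q h
      rw [h1, h2]
      exact ih i (by omega)

lemma geodesic_coords (hconn : G.Connected) {a b y : V} (p : G.Walk a b)
    (hlen : p.length = G.dist a b) (hy : y ∈ p.support) :
    G.dist a y + G.dist y b = G.dist a b ∧ y = p.getVert (G.dist a y) := by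
  have hspec := p.take_spec hy
  have hlen2 : (p.takeUntil y hy).length + (p.dropUntil y hy).length = p.length := by
    rw [← SimpleGraph.Walk.length_append, hspec]
  have h1 : G.dist a y ≤ (p.takeUntil y hy).length := SimpleGraph.dist_le _
  have h2 : G.dist y b ≤ (p.dropUntil y hy).length := SimpleGraph.dist_le _
  have h3 : G.dist a b ≤ G.dist a y + G.dist y b := hconn.dist_triangle
  have heq1 : G.dist a y = (p.takeUntil y hy).length := by omega
  refine ⟨by omega, ?_⟩
  have this0 : ((p.takeUntil y hy).append (p.dropUntil y hy)).getVert
      ((p.takeUntil y hy).length) = y := by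
    rw [SimpleGraph.Walk.getVert_append]
    simp
  rw [hspec] at this0
  rw [heq1, this0]

lemma dist_bound (hconn : G.Connected) (hcard : Nat.card G.edgeSet = Fintype.card V)
    {v u w x : V} (hNv : G.neighborSet v = {u}) (hNw : G.neighborSet w = {x})
    (hvw : v ≠ w) (hvx : v ≠ x) (hwu : w ≠ u) :
    G.dist u x + 4 ≤ Fintype.card V := by
  letI : DecidableRel G.Adj := Classical.decRel _
  obtain ⟨p, hp, hlen⟩ := hconn.exists_path_of_dist u x
  set n := Fintype.card V with hn
  set L := G.dist u x with hL
  have hvu : v ≠ u := (pendant_adj hNv).ne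
  have hwx : w ≠ x := (pendant_adj hNw).ne
  have hvsup : v ∉ p.support := pendant_not_mem_support hNv p hp hvu.symm hvx.symm
  have hwsup : w ∉ p.support := pendant_not_mem_support hNw p hp hwu.symm hwx.symm
  have hsupcard : p.support.toFinset.card = L + 1 := by
    rw [List.toFinset_card_of_nodup hp.support_nodup, SimpleGraph.Walk.length_support, hlen]
  -- vertex count
  have hTcard : L + 3 ≤ n := by
    have hsub : (insert v (insert w p.support.toFinset)).card ≤ n := Finset.card_le_univ _
    rw [Finset.card_insert_of_notMem, Finset.card_insert_of_notMem] at hsub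
    · omega
    · rwa [List.mem_toFinset]
    · rw [Finset.mem_insert]
      push_neg
      exact ⟨hvw, by rwa [List.mem_toFinset]⟩
  by_contra hcon
  have hneq : n = L + 3 := by omega
  -- all vertices are on the path or in {v, w}
  have hT : insert v (insert w p.support.toFinset) = Finset.univ := by
    apply Finset.eq_univ_of_card
    rw [Finset.card_insert_of_notMem, Finset.card_insert_of_notMem]
    · omega
    · rwa [List.mem_toFinset]
    · rw [Finset.mem_insert]
      push_neg
      exact ⟨hvw, by rwa [List.mem_toFinset]⟩
  -- the edge count
  have hedge : G.edgeFinset.card = n := by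
    rw [← hcard, Nat.card_coe_set_eq, Set.ncard_eq_toFinset_card']
    congr 1
  have hvu_edge : s(v, u) ∉ p.edges := fun h => hvsup (p.fst_mem_support_of_mem_edges h)
  have hwx_edge : s(w, x) ∉ p.edges := fun h => hwsup (p.fst_mem_support_of_mem_edges h)
  have hne_edges : s(v, u) ≠ s(w, x) := by
    intro h
    rw [Sym2.eq_iff] at h
    rcases h with ⟨h1, _⟩ | ⟨h1, _⟩
    · exact hvw h1
    · exact hvx h1
  have hFcard : (insert s(v, u) (insert s(w, x) p.edges.toFinset)).card = L + 2 := by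
    rw [Finset.card_insert_of_notMem, Finset.card_insert_of_notMem]
    · rw [List.toFinset_card_of_nodup hp.isTrail.edges_nodup,
        SimpleGraph.Walk.length_edges, hlen]
    · rwa [List.mem_toFinset]
    · rw [Finset.mem_insert]
      push_neg
      exact ⟨hne_edges, by rwa [List.mem_toFinset]⟩
  have hlt : (insert s(v, u) (insert s(w, x) p.edges.toFinset)).card < G.edgeFinset.card := by
    omega
  have hnsub : ¬ (G.edgeFinset ⊆ insert s(v, u) (insert s(w, x) p.edges.toFinset)) := by
    intro hsub
    have := Finset.card_le_card hsub
    omega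
  obtain ⟨e, he, heF⟩ := Finset.not_subset.mp hnsub
  induction e with
  | _ c d =>
    rw [SimpleGraph.mem_edgeFinset, SimpleGraph.mem_edgeSet] at he
    have hcd : c ≠ d := he.ne
    -- c and d are not v or w
    have hcv : c ≠ v := by
      intro h
      have hdu : d = u := (pendant_adj_iff hNv).mp (by rwa [h] at he)
      apply heF
      rw [h, hdu]
      exact Finset.mem_insert_self _ _
    have hdv : d ≠ v := by
      intro h
      have hcu : c = u := (pendant_adj_iff hNv).mp (by rw [h] at he; exact he.symm)
      apply heF
      rw [hcu, h, show s(u, v) = s(v, u) from Sym2.eq_swap]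
      exact Finset.mem_insert_self _ _
    have hcw : c ≠ w := by
      intro h
      have hdx : d = x := (pendant_adj_iff hNw).mp (by rwa [h] at he)
      apply heF
      rw [h, hdx]
      exact Finset.mem_insert_of_mem (Finset.mem_insert_self _ _)
    have hdw : d ≠ w := by
      intro h
      have hcx : c = x := (pendant_adj_iff hNw).mp (by rw [h] at he; exact he.symm)
      apply heF
      rw [hcx, h, show s(x, w) = s(w, x) from Sym2.eq_swap]
      exact Finset.mem_insert_of_mem (Finset.mem_insert_self _ _)
    have hcsup : c ∈ p.support := by
      have : c ∈ insert v (insert w p.support.toFinset) := hT ▸ Finset.mem_univ c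
      rw [Finset.mem_insert, Finset.mem_insert, List.mem_toFinset] at this
      tauto
    have hdsup : d ∈ p.support := by
      have : d ∈ insert v (insert w p.support.toFinset) := hT ▸ Finset.mem_univ d
      rw [Finset.mem_insert, Finset.mem_insert, List.mem_toFinset] at this
      tauto
    obtain ⟨hc1, hc2⟩ := geodesic_coords hconn p (hlen.trans hL) hcsup
    obtain ⟨hd1, hd2⟩ := geodesic_coords hconn p (hlen.trans hL) hdsup
    set i := G.dist u c with hi
    set j := G.dist u d with hj
    have hij : i ≠ j := by
      intro h
      exact hcd (hc2.trans (by rw [h, ← hd2]))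
    have hdist1 : G.dist c d = 1 := SimpleGraph.dist_eq_one_iff_adj.mpr he
    have htri1 : j ≤ i + 1 := by
      have := hconn.dist_triangle (u := u) (v := c) (w := d)
      omega
    have htri2 : i ≤ j + 1 := by
      have h1 := hconn.dist_triangle (u := u) (v := d) (w := c)
      have : G.dist d c = 1 := SimpleGraph.dist_eq_one_iff_adj.mpr he.symm
      omega
    have hplen : p.length = L := hlen
    rcases (by omega : j = i + 1 ∨ i = j + 1) with hcase | hcase
    · have hmem : s(c, d) ∈ p.edges := by
        have : s(p.getVert i, p.getVert (i + 1)) ∈ p.edges :=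
          walk_edges_getVert p i (by omega)
        rwa [← hc2, ← hcase, ← hd2] at this
      exact heF (Finset.mem_insert_of_mem (Finset.mem_insert_of_mem
        (List.mem_toFinset.mpr hmem)))
    · have hmem : s(d, c) ∈ p.edges := by
        have : s(p.getVert j, p.getVert (j + 1)) ∈ p.edges :=
          walk_edges_getVert p j (by omega)
        rwa [← hd2, ← hcase, ← hc2] at this
      refine heF (Finset.mem_insert_of_mem (Finset.mem_insert_of_mem
        (List.mem_toFinset.mpr ?_)))
      rwa [Sym2.eq_swap]


end Aux

/-- in an extremal bipartite unicyclic graph with `(p,q)`-partition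
(`1 < p < q`), all pendant vertices (vertices of degree 1) belong to the larger
part `Q`, i.e. no pendant vertex lies in the part of size `p`. -/
theorem extremal_pendants_in_larger_part (p q : ℕ) (hp : 1 < p) (hpq : p < q)
    (G : SimpleGraph (Fin (p + q))) (s : Finset (Fin (p + q)))
    (hs : ∀ a b, G.Adj a b → (a ∈ s ↔ b ∉ s))
    (hsp : s.card = p) (hsq : sᶜ.card = q)
    (huni : IsUnicyclic G)
    (hmax : ∀ H : SimpleGraph (Fin (p + q)),
      hasBipartition H p q → IsUnicyclic H → wienerIndex H ≤ wienerIndex G) :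
    ∀ v : Fin (p + q), Nat.card (G.neighborSet v) = 1 → v ∉ s := by
  intro v hdeg hv
  obtain ⟨hconn, hcount⟩ := huni
  have hcardV : Fintype.card (Fin (p + q)) = p + q := Fintype.card_fin _
  -- extract the unique neighbor of v
  rw [Nat.card_coe_set_eq, Set.ncard_eq_one] at hdeg
  obtain ⟨u, hNv⟩ := hdeg
  have hadj_vu : G.Adj v u := pendant_adj hNv
  have hu : u ∉ s := (hs v u hadj_vu).mp hv
  -- a pendant vertex in the big part exists
  obtain ⟨w, x, hw, hNw⟩ := exists_pendant_compl hs hsp hsq hpq hconn hcount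
    (by rw [hcardV]; omega)
  have hadj_wx : G.Adj w x := pendant_adj hNw
  have hwns : w ∉ s := Finset.mem_compl.mp hw
  have hx : x ∈ s := by have := hs w x hadj_wx; tauto
  -- basic distinctness
  have hvu : v ≠ u := hadj_vu.ne
  have hwx : w ≠ x := hadj_wx.ne
  have hvw : v ≠ w := fun h => hwns (h ▸ hv)
  have hwu : w ≠ u := by
    intro h
    have hxv : x = v := by
      have : G.Adj w v := by rw [h]; exact hadj_vu.symm
      have := (pendant_adj_iff hNw).mp this
      omega
    -- third vertex argument
    have hcard3 : 0 < (Finset.univ \ {v, u} : Finset (Fin (p + q))).card := by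
      rw [Finset.card_sdiff_of_subset (Finset.subset_univ _), Finset.card_univ, hcardV]
      have : ({v, u} : Finset (Fin (p + q))).card ≤ 2 := Finset.card_insert_le _ _ |>.trans
        (by simp)
      omega
    obtain ⟨y, hy⟩ := Finset.card_pos.mp hcard3
    rw [Finset.mem_sdiff, Finset.mem_insert, Finset.mem_singleton] at hy
    push_neg at hy
    have hyv : y ≠ v := hy.2.1
    have hyu : y ≠ u := hy.2.2
    have e1 : G.dist v y = G.dist u y + 1 := pendant_dist hconn hNv hyv
    have e2 : G.dist w y = G.dist x y + 1 :=
      pendant_dist hconn hNw (fun hh => hyu (hh.trans h))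
    rw [h, hxv] at e2
    omega
  have hvx : v ≠ x := by
    intro h
    apply hwu
    have : G.Adj v w := by rw [h]; exact hadj_wx.symm
    exact ((pendant_adj_iff hNv).mp this).symm ▸ rfl
  -- improvement conditions from maximality
  have himp : ∀ (v₀ u₀ : Fin (p + q)), G.neighborSet v₀ = {u₀} →
      ∀ z, (z ∈ s ↔ u₀ ∈ s) → z ≠ v₀ →
      (∑ c ∈ Finset.univ.erase v₀, G.dist z c) ≤ ∑ c ∈ Finset.univ.erase v₀, G.dist u₀ c := by
    intro v₀ u₀ hN z hz hzv
    by_contra hgt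
    push_neg at hgt
    have hlt := reattach_wiener_gt hconn hN hzv.symm hgt
    have hbi : hasBipartition (reattach G v₀ u₀ z) p q := by
      refine ⟨s, reattach_bipartition hs ?_, hsp, hsq⟩
      have := hs v₀ u₀ (pendant_adj hN)
      tauto
    have huni' : IsUnicyclic (reattach G v₀ u₀ z) :=
      ⟨reattach_connected hconn hN hzv.symm,
        by rw [reattach_card_edgeSet hN hzv.symm]; exact hcount⟩
    have := hmax _ hbi huni'
    omega
  have hA : (∑ c ∈ Finset.univ.erase v, G.dist w c) ≤ ∑ c ∈ Finset.univ.erase v, G.dist u c :=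
    himp v u hNv w (by tauto) hvw.symm
  have hB : (∑ c ∈ Finset.univ.erase w, G.dist v c) ≤ ∑ c ∈ Finset.univ.erase w, G.dist x c :=
    himp w x hNw v (by tauto) hvw
  -- distances
  set L := G.dist u x with hL
  have hd_uw : G.dist v w = L + 2 := by
    have h1 : G.dist w u = G.dist x u + 1 := pendant_dist hconn hNw hwu.symm
    have h2 : G.dist v w = G.dist u w + 1 := pendant_dist hconn hNv hvw.symm
    have h3 : G.dist u w = G.dist w u := SimpleGraph.dist_comm
    have h4 : G.dist x u = G.dist u x := SimpleGraph.dist_comm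
    omega
  -- the sum expansions
  have r2 : (∑ c ∈ Finset.univ.erase v, G.dist v c)
      = (∑ c ∈ Finset.univ.erase v, G.dist u c) + (Finset.univ.erase v).card := by
    rw [Finset.sum_congr rfl
      (fun c hc => pendant_dist hconn hNv (Finset.ne_of_mem_erase hc)),
      Finset.sum_add_distrib, Finset.sum_const, smul_eq_mul, mul_one]
  have r4 : (∑ c ∈ Finset.univ.erase w, G.dist w c)
      = (∑ c ∈ Finset.univ.erase w, G.dist x c) + (Finset.univ.erase w).card := by
    rw [Finset.sum_congr rfl
      (fun c hc => pendant_dist hconn hNw (Finset.ne_of_mem_erase hc)),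
      Finset.sum_add_distrib, Finset.sum_const, smul_eq_mul, mul_one]
  have rv1 : (∑ c ∈ Finset.univ.erase v, G.dist v c) + G.dist v v = ∑ c, G.dist v c :=
    Finset.sum_erase_add _ _ (Finset.mem_univ v)
  have rv2 : (∑ c ∈ Finset.univ.erase w, G.dist v c) + G.dist v w = ∑ c, G.dist v c :=
    Finset.sum_erase_add _ _ (Finset.mem_univ w)
  have rw1 : (∑ c ∈ Finset.univ.erase v, G.dist w c) + G.dist w v = ∑ c, G.dist w c :=
    Finset.sum_erase_add _ _ (Finset.mem_univ v)
  have rw2 : (∑ c ∈ Finset.univ.erase w, G.dist w c) + G.dist w w = ∑ c, G.dist w c :=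
    Finset.sum_erase_add _ _ (Finset.mem_univ w)
  have hd0v : G.dist v v = 0 := SimpleGraph.dist_self (G := G) (v := v)
  have hd0w : G.dist w w = 0 := SimpleGraph.dist_self (G := G) (v := w)
  have hdwv : G.dist w v = L + 2 := by
    rw [SimpleGraph.dist_comm]; exact hd_uw
  have hm1 : (Finset.univ.erase v).card = p + q - 1 := by
    rw [Finset.card_erase_of_mem (Finset.mem_univ v), Finset.card_univ, hcardV]
  have hm2 : (Finset.univ.erase w).card = p + q - 1 := by
    rw [Finset.card_erase_of_mem (Finset.mem_univ w), Finset.card_univ, hcardV]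
  have hbound : L + 4 ≤ p + q := by
    have := dist_bound hconn hcount hNv hNw hvw hvx hwu
    rwa [hcardV] at this
  omega
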